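/- Let A be a subset of a Banach space E and define the De Blasi measure of weak noncompactness ω(A) = inf { ε > 0 : A ⊆ D + εB_E for some weakly compact D ⊆ E }. If T : E → F, U : F → ℓ¹, V : ℓ¹ → E are bounded operators with UTV = I_{ℓ¹}, then ω(T B_E) ≥ ‖U‖⁻¹ ‖V‖⁻¹. -/

import Mathlib

open Pointwise

set_option maxHeartbeats 1000000


noncomputable abbrev XX := lp (fun _ : ℕ => ℝ) 1

lemma l1_hasSum (x : XX) : HasSum (fun k => ‖x k‖) ‖x‖ := by
  have := lp.hasSum_norm (E := fun _ : ℕ => ℝ) (p := 1) (by norm_num) x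
  simpa using this

lemma l1_summable_abs (x : XX) : Summable (fun k => ‖x k‖) := (l1_hasSum x).summable

lemma l1_summable (x : XX) : Summable (fun k => x k) := (l1_summable_abs x).of_norm

lemma tail_le_of_summable {f : ℕ → ℝ} (hf : Summable f) (hf0 : ∀ k, 0 ≤ f k) (K : ℕ) :
    ∑' k, f (k + K) ≤ ∑' k, f k :=
  ((summable_nat_add_iff K).2 hf).tsum_le_tsum_of_inj (· + K) (add_left_injective K)
    (fun c _ => hf0 c) (fun k => le_rfl) hf

lemma tail_bound (K : ℕ) (x : XX) : |∑' k, x (k + K)| ≤ ‖x‖ := by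
  have h1 : ‖∑' k, x (k + K)‖ ≤ ∑' k, ‖x (k + K)‖ :=
    norm_tsum_le_tsum_norm (f := fun k => x (k + K))
      ((summable_nat_add_iff (f := fun k => ‖x k‖) K).2 (l1_summable_abs x))
  have h2 : ∑' k, ‖x (k + K)‖ ≤ ∑' k, ‖x k‖ :=
    tail_le_of_summable (l1_summable_abs x) (fun k => norm_nonneg _) K
  have h3 : ∑' k, ‖x k‖ = ‖x‖ := (l1_hasSum x).tsum_eq
  rw [← Real.norm_eq_abs]
  linarith

noncomputable def tailCLM (K : ℕ) : XX →L[ℝ] ℝ :=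
  LinearMap.mkContinuous
    { toFun := fun x => ∑' k, x (k + K)
      map_add' := by
        intro x y
        have hx := (summable_nat_add_iff (f := fun k => x k) K).2 (l1_summable x)
        have hy := (summable_nat_add_iff (f := fun k => y k) K).2 (l1_summable y)
        simp only [lp.coeFn_add, Pi.add_apply]
        exact Summable.tsum_add hx hy
      map_smul' := by
        intro c x
        simp only [lp.coeFn_smul, Pi.smul_apply, smul_eq_mul, RingHom.id_apply]
        exact tsum_mul_left }
    1 (fun x => by simpa using tail_bound K x)

lemma tailCLM_apply (K : ℕ) (x : XX) : tailCLM K x = ∑' k, x (k + K) := rfl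

lemma tail_bound' (K : ℕ) (x : XX) : |tailCLM K x| ≤ ‖x‖ := by
  rw [tailCLM_apply]; exact tail_bound K x

noncomputable def deBlasi {E : Type*} [NormedAddCommGroup E] [NormedSpace ℝ E]
    (A : Set E) : ℝ :=
  sInf {ε : ℝ | 0 < ε ∧ ∃ D : Set E, IsCompact (toWeakSpace ℝ E '' D) ∧
    A ⊆ D + ε • Metric.closedBall (0 : E) 1}

theorem deBlasi_ge_of_factorization
    {E F : Type*} [NormedAddCommGroup E] [NormedSpace ℝ E] [CompleteSpace E]
    [NormedAddCommGroup F] [NormedSpace ℝ F] [CompleteSpace F]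
    (T : E →L[ℝ] F) (U : F →L[ℝ] lp (fun _ : ℕ => ℝ) 1)
    (V : lp (fun _ : ℕ => ℝ) 1 →L[ℝ] E)
    (hUTV : U.comp (T.comp V) = ContinuousLinearMap.id ℝ (lp (fun _ : ℕ => ℝ) 1)) :
    ‖U‖⁻¹ * ‖V‖⁻¹ ≤ deBlasi (T '' Metric.closedBall (0 : E) 1) := by
  classical
  set X := lp (fun _ : ℕ => ℝ) 1 with hXdef
  have hkey : ∀ x : X, U (T (V x)) = x := by
    intro x
    have := congrArg (fun (S : X →L[ℝ] X) => S x) hUTV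
    exact this
  set e : ℕ → X := fun n => lp.single 1 n (1 : ℝ) with he
  have hen : ∀ n, ‖e n‖ = 1 := by
    intro n
    have := lp.norm_single (E := fun _ : ℕ => ℝ) (p := 1) (by norm_num) n (1 : ℝ)
    exact this.trans norm_one
  have henapp : ∀ n j, (e n : ℕ → ℝ) j = if j = n then 1 else 0 := by
    intro n j
    by_cases h : j = n
    · subst h; simp [he, lp.single_apply_self]
    · simp [he, lp.single_apply_ne _ _ _ h, h]
  -- positivity of norms
  have hprod : (1 : ℝ) ≤ ‖U‖ * (‖T‖ * ‖V‖) := by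
    have h0 : ‖e 0‖ ≤ ‖U‖ * (‖T‖ * ‖V‖) * ‖e 0‖ := by
      calc ‖e 0‖ = ‖U (T (V (e 0)))‖ := by rw [hkey]
        _ ≤ ‖U‖ * ‖T (V (e 0))‖ := U.le_opNorm _
        _ ≤ ‖U‖ * (‖T‖ * ‖V (e 0)‖) :=
            mul_le_mul_of_nonneg_left (T.le_opNorm _) (norm_nonneg U)
        _ ≤ ‖U‖ * (‖T‖ * (‖V‖ * ‖e 0‖)) :=
            mul_le_mul_of_nonneg_left
              (mul_le_mul_of_nonneg_left (V.le_opNorm _) (norm_nonneg T)) (norm_nonneg U)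
        _ = ‖U‖ * (‖T‖ * ‖V‖) * ‖e 0‖ := by ring
    rw [hen 0] at h0; linarith
  have hUpos : 0 < ‖U‖ := by
    rcases (norm_nonneg U).lt_or_eq with h | h
    · exact h
    · exfalso; rw [← h, zero_mul] at hprod; linarith
  have hVpos : 0 < ‖V‖ := by
    rcases (norm_nonneg V).lt_or_eq with h | h
    · exact h
    · exfalso; rw [← h, mul_zero, mul_zero] at hprod; linarith
  rw [deBlasi]
  apply le_csInf
  · -- nonempty
    refine ⟨‖T‖ + 1, by positivity, {0}, ?_, ?_⟩
    · rw [Set.image_singleton]; exact isCompact_singleton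
    · rintro _ ⟨y, hy, rfl⟩
      have hy' : ‖y‖ ≤ 1 := by simpa [Metric.mem_closedBall] using hy
      have hmem : T y ∈ (‖T‖ + 1) • Metric.closedBall (0 : F) 1 := by
        rw [smul_closedBall _ _ zero_le_one]
        simp only [smul_zero, mul_one, Metric.mem_closedBall, dist_zero_right]
        rw [Real.norm_eq_abs, abs_of_pos (by positivity)]
        calc ‖T y‖ ≤ ‖T‖ * ‖y‖ := T.le_opNorm y
          _ ≤ ‖T‖ * 1 := mul_le_mul_of_nonneg_left hy' (norm_nonneg T)
          _ ≤ ‖T‖ + 1 := by linarith [norm_nonneg T]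
      exact Set.mem_add.2 ⟨0, rfl, T y, hmem, zero_add _⟩
  · rintro ε ⟨hεpos, D, hD, hsub⟩
    by_contra hlt
    push_neg at hlt
    set δ : ℝ := ε * (‖U‖ * ‖V‖) with hδdef
    have hδpos : 0 < δ := by positivity
    have hδ1 : δ < 1 := by
      have h := mul_lt_mul_of_pos_right hlt (by positivity : 0 < ‖U‖ * ‖V‖)
      calc δ = ε * (‖U‖ * ‖V‖) := rfl
        _ < ‖U‖⁻¹ * ‖V‖⁻¹ * (‖U‖ * ‖V‖) := h
        _ = 1 := by field_simp
    -- decomposition of e n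
    have hdec : ∀ n : ℕ, ∃ d ∈ D, ∃ b : F, ‖b‖ ≤ ε ∧
        e n = (‖V‖ • U) d + ‖V‖ • U b := by
      intro n
      have h1 : ‖V‖⁻¹ • V (e n) ∈ Metric.closedBall (0 : E) 1 := by
        rw [Metric.mem_closedBall, dist_zero_right, norm_smul, Real.norm_eq_abs,
          abs_of_pos (inv_pos.2 hVpos)]
        have h2 := V.le_opNorm (e n)
        rw [hen n, mul_one] at h2
        calc ‖V‖⁻¹ * ‖V (e n)‖ ≤ ‖V‖⁻¹ * ‖V‖ :=
              mul_le_mul_of_nonneg_left h2 (by positivity)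
          _ = 1 := inv_mul_cancel₀ hVpos.ne'
      have h2 : T (‖V‖⁻¹ • V (e n)) ∈ D + ε • Metric.closedBall (0 : F) 1 :=
        hsub ⟨_, h1, rfl⟩
      rw [Set.mem_add] at h2
      obtain ⟨a, ha, z, hz, hsum⟩ := h2
      have hznorm : ‖z‖ ≤ ε := by
        rw [smul_closedBall _ _ zero_le_one] at hz
        simp only [smul_zero, mul_one, Metric.mem_closedBall, dist_zero_right,
          Real.norm_eq_abs, abs_of_pos hεpos] at hz
        exact hz
      refine ⟨a, ha, z, hznorm, ?_⟩
      have h3 : T (V (e n)) = ‖V‖ • a + ‖V‖ • z := by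
        have h4 : a + z = ‖V‖⁻¹ • T (V (e n)) := by rw [hsum, map_smul]
        have h5 : ‖V‖ • (a + z) = T (V (e n)) := by
          rw [h4, smul_inv_smul₀ hVpos.ne']
        rw [← h5, smul_add]
      calc e n = U (T (V (e n))) := (hkey _).symm
        _ = U (‖V‖ • a + ‖V‖ • z) := by rw [h3]
        _ = (‖V‖ • U) a + ‖V‖ • U z := by
            rw [map_add, map_smul, map_smul]; rfl
    choose d hd b hb hdecomp using hdec
    set G : F →L[ℝ] X := ‖V‖ • U with hG
    -- compactness of image
    have hK : IsCompact (toWeakSpace ℝ X '' (G '' D)) := by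
      have himg : toWeakSpace ℝ X '' (G '' D)
          = (WeakSpace.map G) '' (toWeakSpace ℝ F '' D) := by
        rw [Set.image_image, Set.image_image]
        rfl
      rw [himg]
      exact hD.image (WeakSpace.map G).continuous
    set c : ℕ → WeakSpace ℝ X := fun n => toWeakSpace ℝ X (G (d n)) with hc
    have hle : Filter.map c Filter.atTop ≤ Filter.principal (toWeakSpace ℝ X '' (G '' D)) :=
      Filter.le_principal_iff.2 <| Filter.mem_map.2 <| Filter.Eventually.of_forall
        fun n => ⟨G (d n), ⟨d n, hd n, rfl⟩, rfl⟩
    obtain ⟨w, hw, hwc⟩ := hK.exists_clusterPt hle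
    obtain ⟨dd, hddmem, hwdd⟩ := hw
    set η : ℝ := (1 - δ) / 4 with hηdef
    have hηpos : 0 < η := by rw [hηdef]; linarith
    have htail : ∀ᶠ K0 in Filter.atTop, ∑' k, ‖dd (k + K0)‖ < η :=
      (tendsto_sum_nat_add fun k => ‖dd k‖).eventually_lt_const hηpos
    obtain ⟨K0, hK0⟩ := htail.exists
    set φ := tailCLM K0 with hφ
    have hφdd : |φ dd| < η := by
      rw [hφ, tailCLM_apply]
      have h1 : ‖∑' k, dd (k + K0)‖ ≤ ∑' k, ‖dd (k + K0)‖ :=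
        norm_tsum_le_tsum_norm (f := fun k => dd (k + K0))
          ((summable_nat_add_iff (f := fun k => ‖dd k‖) K0).2 (l1_summable_abs dd))
      rw [← Real.norm_eq_abs]; linarith
    -- weak continuity of φ
    have hψ : Continuous fun z : WeakSpace ℝ X => φ ((toWeakSpace ℝ X).symm z) :=
      WeakBilin.eval_continuous ((topDualPairing ℝ X).flip) φ
    have hwc' : MapClusterPt w Filter.atTop c := hwc
    have hcl2 := hwc'.continuousAt_comp hψ.continuousAt
    have hψw : (toWeakSpace ℝ X).symm w = dd := by
      rw [← hwdd]; exact (toWeakSpace ℝ X).symm_apply_apply dd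
    rw [hψw] at hcl2
    have hfreq := mapClusterPt_iff_frequently.1 hcl2 (Metric.ball (φ dd) η)
      (Metric.ball_mem_nhds _ hηpos)
    -- lower bound eventually
    have hlower : ∀ n, K0 ≤ n → 4 * η ≤ φ (G (d n)) := by
      intro n hn
      have hsn : e n - G (d n) = ‖V‖ • U (b n) := by
        rw [hdecomp n, hG]; abel
      have hsnorm : ‖e n - G (d n)‖ ≤ δ := by
        rw [hsn, norm_smul, Real.norm_eq_abs, abs_of_pos hVpos]
        have h1 : ‖U (b n)‖ ≤ ‖U‖ * ε := by
          calc ‖U (b n)‖ ≤ ‖U‖ * ‖b n‖ := U.le_opNorm _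
            _ ≤ ‖U‖ * ε := mul_le_mul_of_nonneg_left (hb n) (norm_nonneg U)
        calc ‖V‖ * ‖U (b n)‖ ≤ ‖V‖ * (‖U‖ * ε) :=
              mul_le_mul_of_nonneg_left h1 (norm_nonneg V)
          _ = δ := by rw [hδdef]; ring
      have hφe : φ (e n) = 1 := by
        rw [hφ, tailCLM_apply]
        have heq : ∀ j : ℕ, (e n : ℕ → ℝ) (j + K0) = if j = n - K0 then 1 else 0 := by
          intro j
          by_cases hj : j = n - K0
          · subst hj
            have hsub' : n - K0 + K0 = n := Nat.sub_add_cancel hn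
            simp [henapp, hsub']
          · have hne : j + K0 ≠ n := fun hcon => hj (by omega)
            simp [henapp, hne, hj]
        calc ∑' j, (e n : ℕ → ℝ) (j + K0)
            = ∑' j, (if j = n - K0 then (1 : ℝ) else 0) := tsum_congr heq
          _ = 1 := tsum_ite_eq _ _
      have hφs : |φ (e n - G (d n))| ≤ δ := le_trans (tail_bound' K0 _) hsnorm
      have hsplit : φ (G (d n)) = φ (e n) - φ (e n - G (d n)) := by
        rw [map_sub]; ring
      have habs := (abs_le.1 hφs).2
      rw [hsplit, hφe, hηdef]
      linarith
    have hev : ∀ᶠ n in Filter.atTop, 4 * η ≤ φ (G (d n)) :=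
      Filter.eventually_atTop.2 ⟨K0, hlower⟩
    obtain ⟨n, hn1, hn2⟩ := (hfreq.and_eventually hev).exists
    have hn1' : |φ (G (d n)) - φ dd| < η := by
      have hstep : ((fun z : WeakSpace ℝ X => φ ((toWeakSpace ℝ X).symm z)) ∘ c) n
          = φ ((toWeakSpace ℝ X).symm (toWeakSpace ℝ X (G (d n)))) := rfl
      rw [hstep, (toWeakSpace ℝ X).symm_apply_apply] at hn1
      simpa [Metric.mem_ball, Real.dist_eq] using hn1
    have h1 := (abs_lt.1 hn1').1
    have h2 := (abs_lt.1 hn1').2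
    have h3 := (abs_lt.1 hφdd).1
    have h4 := (abs_lt.1 hφdd).2
    linarith
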